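/- Let a, β, γ > 0 and define g : (a, ∞) → ℝ by g(λ) = exp(−((βγ−1)/β)·λ)·(λ − a)^{a/β − 1}. Then g is twice differentiable on (a, ∞) and for every λ > a it satisfies the second-order linear ODE β(λ − a)·g''(λ) − (λ + β(−2 + aγ − γλ))·g'(λ) + (βγ − 1)·g(λ) = 0. -/

import Mathlib

open Real

/-- The function `g(λ) = e^{−((βγ−1)/β)λ} (λ−a)^{a/β − 1}` is twice differentiable on
`(a, ∞)` and solves the ODE
`β(λ−a) g'' − (λ + β(−2 + aγ − γλ)) g' + (βγ − 1) g = 0` there. -/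
theorem stationary_density_ode
    (a β γ : ℝ) (ha : 0 < a) (hβ : 0 < β) (hγ : 0 < γ)
    (g : ℝ → ℝ)
    (hg : ∀ l : ℝ, g l = Real.exp (-((β * γ - 1) / β) * l) * (l - a) ^ (a / β - 1)) :
    ∀ l : ℝ, a < l →
      DifferentiableAt ℝ g l ∧ DifferentiableAt ℝ (deriv g) l ∧
      β * (l - a) * deriv (deriv g) l - (l + β * (-2 + a * γ - γ * l)) * deriv g l +
        (β * γ - 1) * g l = 0 := by
  set c : ℝ := -((β * γ - 1) / β) with hc
  set p : ℝ := a / β - 1 with hp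
  set g1 : ℝ → ℝ := fun y => Real.exp (c * y) * c * (y - a) ^ p +
      Real.exp (c * y) * (p * (y - a) ^ (p - 1)) with hg1
  have key : ∀ y : ℝ, a < y → HasDerivAt g (g1 y) y := by
    intro y hy
    have hxy : y - a ≠ 0 := ne_of_gt (by linarith)
    have h1 : HasDerivAt (fun t : ℝ => Real.exp (c * t)) (Real.exp (c * y) * c) y := by
      simpa using ((hasDerivAt_id y).const_mul c).exp
    have h2 : HasDerivAt (fun t : ℝ => (t - a) ^ p) (p * (y - a) ^ (p - 1) * 1) y :=
      by have := (Real.hasDerivAt_rpow_const (x := y - a) (p := p) (Or.inl hxy)).comp y ((hasDerivAt_id y).sub_const a); exact this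
    have h3 := h1.mul h2
    have hgeq : g = fun t : ℝ => Real.exp (c * t) * (t - a) ^ p := funext fun t => hg t
    rw [hgeq, hg1]
    exact h3.congr_deriv (by beta_reduce; ring)
  intro l hl
  have hx : (0 : ℝ) < l - a := by linarith
  have hd1 : DifferentiableAt ℝ g l := (key l hl).differentiableAt
  -- deriv g agrees with g1 on a neighborhood of l
  have hopen : IsOpen {y : ℝ | a < y} := isOpen_lt continuous_const continuous_id
  have hev : deriv g =ᶠ[nhds l] g1 := by
    filter_upwards [hopen.mem_nhds hl] with y hy using (key y hy).deriv
  -- derivative of g1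
  have hxne : l - a ≠ 0 := ne_of_gt hx
  have h1 : HasDerivAt (fun t : ℝ => Real.exp (c * t)) (Real.exp (c * l) * c) l := by
    simpa using ((hasDerivAt_id l).const_mul c).exp
  have h2 : HasDerivAt (fun t : ℝ => (t - a) ^ p) (p * (l - a) ^ (p - 1) * 1) l :=
    by have := (Real.hasDerivAt_rpow_const (x := l - a) (p := p) (Or.inl hxne)).comp l ((hasDerivAt_id l).sub_const a); exact this
  have h2' : HasDerivAt (fun t : ℝ => (t - a) ^ (p - 1))
      ((p - 1) * (l - a) ^ (p - 1 - 1) * 1) l :=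
    by have := (Real.hasDerivAt_rpow_const (x := l - a) (p := p - 1) (Or.inl hxne)).comp l ((hasDerivAt_id l).sub_const a); exact this
  have hG1 : HasDerivAt g1
      ((Real.exp (c * l) * c * c * (l - a) ^ p + Real.exp (c * l) * c * (p * (l - a) ^ (p - 1) * 1))
        + (Real.exp (c * l) * c * (p * (l - a) ^ (p - 1)) +
            Real.exp (c * l) * (p * ((p - 1) * (l - a) ^ (p - 1 - 1) * 1)))) l := by
    exact ((h1.mul_const c).mul h2).add (h1.mul (h2'.const_mul p))
  have hd2 : DifferentiableAt ℝ (deriv g) l :=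
    (hG1.differentiableAt).congr_of_eventuallyEq hev
  refine ⟨hd1, hd2, ?_⟩
  have hderiv1 : deriv g l = g1 l := (key l hl).deriv
  have hderiv2 : deriv (deriv g) l = deriv g1 l := hev.deriv_eq
  rw [hderiv1, hderiv2, hG1.deriv, hg1, hg l]
  have e1 : (l - a) ^ (p - 1) = (l - a) ^ p / (l - a) := by
    rw [Real.rpow_sub hx, Real.rpow_one]
  have e2 : (l - a) ^ (p - 1 - 1) = (l - a) ^ (p - 1) / (l - a) := by
    rw [Real.rpow_sub hx, Real.rpow_one]
  simp only [e2, e1]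
  simp only [e2, e1, hc, hp]
  have hE : Real.exp (-((β * γ - 1) / β) * l) ≠ 0 := Real.exp_ne_zero _
  generalize (l - a) ^ (a / β - 1) = X
  field_simp
  ring
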